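/- Let T > 0, let E ⊂ (0,T) be a measurable set of positive Lebesgue measure, let g : (0,T) → [0, +∞) be a measurable function, and let N : (0,T] → [0, +∞) be a nonincreasing function. Assume there is a constant C > 0 such that for almost every t ∈ E and for every s with 0 < s < t one has N(t) ≤ ( C·e^{C/(t−s)}·g(t) )^{1/2} · N(s)^{1/2}. Then there exists a constant C' > 0, depending only on C, E and T, such that N(T) ≤ C' · ∫_E g(t) dt. -/

import Mathlib

open MeasureTheory


private lemma sumsq_le (K : ℕ) :
    ∑ k ∈ Finset.range K, (1/2:ℝ)^(k+1) * ((k:ℝ)+1)^2 ≤ 6 - ((K:ℝ)^2 + 4*K + 6) * (1/2:ℝ)^K := by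
  induction K with
  | zero => simp
  | succ K ih =>
    rw [Finset.sum_range_succ]
    have h2 : (0:ℝ) < (1/2:ℝ)^K := by positivity
    have hp : (1/2:ℝ)^(K+1) = (1/2:ℝ)^K * (1/2) := pow_succ _ _
    push_cast
    nlinarith [ih, h2, hp]

private lemma geomsum (K : ℕ) : ∑ k ∈ Finset.range K, (1/2:ℝ)^(k+1) = 1 - (1/2:ℝ)^K := by
  induction K with
  | zero => simp
  | succ K ih => rw [Finset.sum_range_succ, ih]; ring

private lemma telescope (L β : ℕ → ℝ) (hrec : ∀ k, L k ≤ (1/2)*β k + (1/2)*L (k+1)) :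
    ∀ K, L 0 ≤ (∑ k ∈ Finset.range K, (1/2:ℝ)^(k+1) * β k) + (1/2:ℝ)^K * L K := by
  intro K
  induction K with
  | zero => simp
  | succ K ih =>
    rw [Finset.sum_range_succ, pow_succ]
    have hp : (0:ℝ) ≤ (1/2:ℝ)^K := by positivity
    nlinarith [mul_le_mul_of_nonneg_left (hrec K) hp, ih]

private lemma arith_gap (C m gap k : ℝ) (hC : 0 < C) (hm : 0 < m) (hgap : 0 < gap)
    (hk : 0 ≤ k) (h : m ≤ gap * (2*(2*k+2)*(2*k+3))) :
    C / gap ≤ 18*C/m*(k+1)^2 := by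
  have heq : 18*C/m*(k+1)^2 = (18*C*(k+1)^2)/m := by ring
  rw [heq, div_le_div_iff₀ hgap hm]
  nlinarith [mul_le_mul_of_nonneg_left h hC.le,
    mul_nonneg (mul_nonneg hC.le hgap.le) (by nlinarith : (0:ℝ) ≤ 10*k^2+16*k+6)]

private lemma arith_beta (C m k lc b d LI : ℝ) (hC : 0 < C) (hm : 0 < m) (hk : 0 ≤ k)
    (h1 : lc ≤ C) (h2 : b ≤ 18*C/m*(k+1)^2) (h3 : d ≤ 16/m*(k+1)^2 + LI) :
    lc + b + d ≤ (C + 18*C/m + 16/m)*(k+1)^2 + LI := by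
  nlinarith [mul_nonneg hC.le (by nlinarith : (0:ℝ) ≤ k^2+2*k)]

private lemma arith_mk (m k : ℝ) (hm : 0 < m) (hk : 0 ≤ k) :
    (2*(2*(2*k+1)*(2*k+2)))/m ≤ 16/m*(k+1)^2 := by
  have heq3 : 16/m*(k+1)^2 = (16*(k+1)^2)/m := by ring
  rw [heq3, div_le_div_iff₀ hm hm]
  nlinarith [mul_nonneg (by nlinarith : (0:ℝ) ≤ 8*k+8) hm.le]

private lemma arith_main (L0 LK S p LI a mx aLI : ℝ) (hp : 0 ≤ p)
    (h1 : L0 ≤ a*S + (1-p)*LI + p*LK) (h6 : a*S ≤ a*6) (h9 : p*LK ≤ p*mx)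
    (hLIa : -LI ≤ aLI) : L0 ≤ 6*a + LI + p*(aLI+mx) := by
  nlinarith [mul_le_mul_of_nonneg_left hLIa hp]

set_option maxHeartbeats 2000000 in
theorem stmt_9 (T : ℝ) (hT : 0 < T) (E : Set ℝ) (hE : MeasurableSet E)
    (hEsub : E ⊆ Set.Ioo 0 T) (hEpos : 0 < volume E)
    (C : ℝ) (hC : 0 < C) :
    ∃ C' : ℝ, 0 < C' ∧
      ∀ g : ℝ → ℝ, Measurable g → (∀ t ∈ Set.Ioo 0 T, 0 ≤ g t) →
        ∀ Nf : ℝ → ℝ, (∀ t ∈ Set.Ioc 0 T, 0 ≤ Nf t) →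
          (∀ s ∈ Set.Ioc 0 T, ∀ t ∈ Set.Ioc 0 T, s ≤ t → Nf t ≤ Nf s) →
          (∀ᵐ t ∂(volume.restrict E), ∀ s : ℝ, 0 < s → s < t →
              Nf t ≤ (C * Real.exp (C / (t - s)) * g t) ^ (1 / 2 : ℝ) * (Nf s) ^ (1 / 2 : ℝ)) →
          ENNReal.ofReal (Nf T) ≤ ENNReal.ofReal C' * ∫⁻ t in E, ENNReal.ofReal (g t) := by
  classical
  have hEfin : volume E ≠ ⊤ := by
    have h1 : volume E ≤ volume (Set.Ioo 0 T) := measure_mono hEsub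
    rw [Real.volume_Ioo] at h1
    exact (h1.trans_lt ENNReal.ofReal_lt_top).ne
  set m : ℝ := (volume E).toReal with hm
  have hmpos : 0 < m := ENNReal.toReal_pos hEpos.ne' hEfin
  have hmT : m ≤ T := by
    have h1 : volume E ≤ volume (Set.Ioo 0 T) := measure_mono hEsub
    rw [Real.volume_Ioo] at h1
    have := ENNReal.toReal_mono ENNReal.ofReal_ne_top h1
    rwa [ENNReal.toReal_ofReal (by linarith : (0:ℝ) ≤ T - 0), sub_zero] at this
  -- the distribution function F
  set F : ℝ → ℝ := fun y => (volume (E ∩ Set.Ioc 0 y)).toReal with hF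
  have hFfin : ∀ y : ℝ, volume (E ∩ Set.Ioc 0 y) ≠ ⊤ := fun y =>
    ((measure_mono Set.inter_subset_left).trans_lt (lt_top_iff_ne_top.2 hEfin)).ne
  have hFmono : Monotone F := by
    intro a b hab
    exact ENNReal.toReal_mono (hFfin b)
      (measure_mono (Set.inter_subset_inter_right _ (Set.Ioc_subset_Ioc_right hab)))
  have hF0 : F 0 = 0 := by simp [hF]
  have hFT : F T = m := by
    have h1 : E ∩ Set.Ioc 0 T = E :=
      Set.inter_eq_left.2 (fun u hu => Set.Ioo_subset_Ioc_self (hEsub hu))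
    rw [hF]
    simp only [h1]
    exact hm.symm
  have hFdiff : ∀ a b : ℝ, 0 ≤ a → a ≤ b →
      F b - F a = (volume (E ∩ Set.Ioc a b)).toReal := by
    intro a b ha hab
    have hsplit : E ∩ Set.Ioc 0 b = (E ∩ Set.Ioc 0 a) ∪ (E ∩ Set.Ioc a b) := by
      rw [← Set.inter_union_distrib_left, Set.Ioc_union_Ioc_eq_Ioc ha hab]
    have hdisj : Disjoint (E ∩ Set.Ioc 0 a) (E ∩ Set.Ioc a b) :=
      Disjoint.mono Set.inter_subset_right Set.inter_subset_right (Set.Ioc_disjoint_Ioc_of_le le_rfl)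
    have hmeas : volume (E ∩ Set.Ioc 0 b)
        = volume (E ∩ Set.Ioc 0 a) + volume (E ∩ Set.Ioc a b) := by
      rw [hsplit, measure_union hdisj (hE.inter measurableSet_Ioc)]
    have hfin2 : volume (E ∩ Set.Ioc a b) ≠ ⊤ :=
      ((measure_mono Set.inter_subset_left).trans_lt (lt_top_iff_ne_top.2 hEfin)).ne
    rw [hF]
    simp only
    rw [hmeas, ENNReal.toReal_add (hFfin a) hfin2]
    ring
  have hFlip : ∀ a b : ℝ, a ≤ b → F b - F a ≤ b - a := by
    have hstep : ∀ a b : ℝ, 0 ≤ a → a ≤ b → F b - F a ≤ b - a := by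
      intro a b ha hab
      rw [hFdiff a b ha hab]
      have h1 : volume (E ∩ Set.Ioc a b) ≤ ENNReal.ofReal (b - a) := by
        refine le_trans (measure_mono Set.inter_subset_right) ?_
        rw [Real.volume_Ioc]
      have := ENNReal.toReal_mono ENNReal.ofReal_ne_top h1
      rwa [ENNReal.toReal_ofReal (by linarith)] at this
    intro a b hab
    rcases le_total 0 a with ha | ha
    · exact hstep a b ha hab
    · have hFa : F a = 0 := by
        rw [hF]; simp only
        rw [Set.Ioc_eq_empty (not_lt.2 ha)]; simp
      rcases le_total b 0 with hb | hb
      · have hFb : F b = 0 := by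
          rw [hF]; simp only
          rw [Set.Ioc_eq_empty (not_lt.2 hb)]; simp
        rw [hFa, hFb]; linarith
      · have h2 := hstep 0 b le_rfl hb
        rw [hF0] at h2
        rw [hFa]; linarith
  -- continuity of F and choice of levels x j
  have hFcont : Continuous F := by
    have hlw : LipschitzWith 1 F := by
      apply LipschitzWith.of_dist_le_mul
      intro a b
      rw [Real.dist_eq, Real.dist_eq, NNReal.coe_one, one_mul]
      rcases le_total a b with h | h
      · rw [abs_sub_comm, abs_of_nonneg (sub_nonneg.2 (hFmono h)),
          abs_sub_comm, abs_of_nonneg (sub_nonneg.2 h)]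
        exact hFlip a b h
      · rw [abs_of_nonneg (sub_nonneg.2 (hFmono h)), abs_of_nonneg (sub_nonneg.2 h)]
        exact hFlip b a h
    exact hlw.continuous
  have hxex : ∀ j : ℕ, ∃ y, y ∈ Set.Icc 0 T ∧ F y = m/2 + m/(2*((j:ℝ)+1)) := by
    intro j
    have hj1 : (0:ℝ) < (j:ℝ) + 1 := by positivity
    have hv1 : m/2 + m/(2*((j:ℝ)+1)) ∈ Set.Icc (F 0) (F T) := by
      rw [hF0, hFT]
      constructor
      · positivity
      · have h1 : m/(2*((j:ℝ)+1)) ≤ m/2 := by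
          rw [div_le_div_iff₀ (by positivity) (by norm_num)]
          nlinarith [(Nat.cast_nonneg j : (0:ℝ) ≤ (j:ℝ)), hmpos.le]
        linarith
    obtain ⟨y, hy, hfy⟩ := intermediate_value_Icc hT.le hFcont.continuousOn hv1
    exact ⟨y, hy, hfy⟩
  choose x hxmem hxval using hxex
  have hxlt : ∀ i j : ℕ, i < j → x j < x i := by
    intro i j hij
    by_contra hcon
    push_neg at hcon
    have h1 := hFmono hcon
    rw [hxval, hxval] at h1
    have h2 : m/(2*((i:ℝ)+1)) ≤ m/(2*((j:ℝ)+1)) := by linarith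
    have hij' : (i:ℝ)+1 < (j:ℝ)+1 := by
      have : (i:ℝ) < j := by exact_mod_cast hij
      linarith
    have h3 : m/(2*((j:ℝ)+1)) < m/(2*((i:ℝ)+1)) := by
      apply div_lt_div_of_pos_left hmpos (by positivity)
      nlinarith [(Nat.cast_nonneg i : (0:ℝ) ≤ (i:ℝ))]
    linarith
  have hFle : ∀ y : ℝ, 0 ≤ y → F y ≤ y := by
    intro y hy
    have := hFlip 0 y hy
    rw [hF0] at this; linarith
  have hxgt : ∀ j : ℕ, m/2 < x j := by
    intro j
    have h1 : m/2 < F (x j) := by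
      rw [hxval]
      have : 0 < m/(2*((j:ℝ)+1)) := by positivity
      linarith
    exact lt_of_lt_of_le h1 (hFle _ (hxmem j).1)
  set α : ℝ := C + 18*C/m + 16/m with halpha
  have hαpos : 0 < α := by positivity
  refine ⟨Real.exp (6*α), Real.exp_pos _, ?_⟩
  intro g hgmeas hgnn Nf hNnn hNmono hInterp
  set It := ∫⁻ u in E, ENNReal.ofReal (g u) with hIt
  rcases eq_top_or_lt_top It with htop | hfint
  · rw [htop, ENNReal.mul_top (by simp [Real.exp_pos, (Real.exp_pos _).ne'])]
    exact le_top
  -- the case where Nf vanishes somewhere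
  by_cases hNpos : ∀ s ∈ Set.Ioc 0 T, 0 < Nf s
  swap
  · push_neg at hNpos
    obtain ⟨s, hs, hNs⟩ := hNpos
    have hNs0 : Nf s = 0 := le_antisymm hNs (hNnn s hs)
    have hNT : Nf T ≤ 0 := by
      have := hNmono s hs T ⟨hT, le_refl T⟩ hs.2
      linarith
    rw [ENNReal.ofReal_eq_zero.2 hNT]
    exact zero_le
  -- the case of zero integral
  by_cases hItz : It = 0
  · have hg0 : (fun u => ENNReal.ofReal (g u)) =ᵐ[volume.restrict E] 0 :=
      (lintegral_eq_zero_iff hgmeas.ennreal_ofReal).1 hItz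
    have hμne : volume.restrict E ≠ 0 := by
      intro h0
      rw [← Measure.restrict_apply_univ E, h0] at hEpos
      simp at hEpos
    have hne : (ae (volume.restrict E)).NeBot := ae_neBot.2 hμne
    have hgood := ((ae_restrict_mem hE).and (hg0.and hInterp)).exists
    obtain ⟨u, huE, hgu, hP⟩ := hgood
    have huT := hEsub huE
    have hgu' : g u = 0 := by
      have h1 : ENNReal.ofReal (g u) = 0 := hgu
      have h2 := hgnn u huT
      rw [ENNReal.ofReal_eq_zero] at h1
      linarith
    have h3 := hP (u/2) (by linarith [huT.1]) (by linarith [huT.1])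
    rw [hgu', mul_zero, Real.zero_rpow (by norm_num), zero_mul] at h3
    have hNT : Nf T ≤ 0 := by
      have := hNmono u ⟨huT.1, huT.2.le⟩ T ⟨hT, le_refl T⟩ huT.2.le
      linarith
    rw [ENNReal.ofReal_eq_zero.2 hNT]
    exact zero_le
  -- main case
  set I : ℝ := It.toReal with hI
  have hIpos : 0 < I := ENNReal.toReal_pos hItz hfint.ne
  have hIt_eq : It = ENNReal.ofReal I := (ENNReal.ofReal_toReal hfint.ne).symm
  set mk : ℕ → ℝ := fun k => m/(2*(2*(k:ℝ)+1)*(2*(k:ℝ)+2)) with hmk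
  have hmkpos : ∀ k : ℕ, 0 < mk k := by
    intro k
    have : (0:ℝ) ≤ (k:ℝ) := Nat.cast_nonneg k
    rw [hmk]
    positivity
  set c : ℕ → ℝ := fun k => 2*I/mk k with hc
  have hcpos : ∀ k : ℕ, 0 < c k := fun k => by
    have := hmkpos k; rw [hc]; positivity
  -- measure of the bands
  have hband : ∀ k : ℕ, volume.restrict E (Set.Ioc (x (2*k+1)) (x (2*k))) = ENNReal.ofReal (mk k) := by
    intro k
    have ha : (0:ℝ) ≤ x (2*k+1) := le_trans (by positivity) (hxgt (2*k+1)).le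
    have hab : x (2*k+1) ≤ x (2*k) := (hxlt (2*k) (2*k+1) (by omega)).le
    have hd := hFdiff _ _ ha hab
    rw [hxval, hxval] at hd
    have hval : ((2*k:ℕ):ℝ) = 2*(k:ℝ) := by push_cast; ring
    have hval2 : ((2*k+1:ℕ):ℝ) = 2*(k:ℝ)+1 := by push_cast; ring
    rw [hval, hval2] at hd
    have hd2 : (volume (E ∩ Set.Ioc (x (2*k+1)) (x (2*k)))).toReal = mk k := by
      rw [← hd, hmk]
      have h1 : (0:ℝ) ≤ (k:ℝ) := Nat.cast_nonneg k
      field_simp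
      ring
    rw [Measure.restrict_apply' hE, Set.inter_comm, ← hd2,
      ENNReal.ofReal_toReal (((measure_mono Set.inter_subset_left).trans_lt
        (lt_top_iff_ne_top.2 hEfin)).ne)]
  -- Markov inequality for the bad sets
  have hbad : ∀ k : ℕ, volume.restrict E {u : ℝ | ENNReal.ofReal (c k) ≤ ENNReal.ofReal (g u)}
      ≤ ENNReal.ofReal (mk k / 2) := by
    intro k
    have h1 := meas_ge_le_lintegral_div (μ := volume.restrict E)
      (f := fun u => ENNReal.ofReal (g u)) hgmeas.ennreal_ofReal.aemeasurable
      (ε := ENNReal.ofReal (c k)) (by simp [ENNReal.ofReal_eq_zero, not_le, hcpos k])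
      ENNReal.ofReal_ne_top
    refine le_trans h1 ?_
    rw [← hIt, hIt_eq, ← ENNReal.ofReal_div_of_pos (hcpos k)]
    apply ENNReal.ofReal_le_ofReal
    rw [hc]
    have h2 := hmkpos k
    rw [div_div_eq_mul_div, div_le_div_iff₀ (by positivity) (by norm_num)]
    ring_nf
    nlinarith [hIpos, h2]
  -- choose good points in each band
  have hsel : ∀ k : ℕ, ∃ u : ℝ, u ∈ E ∧ u ∈ Set.Ioc (x (2*k+1)) (x (2*k)) ∧ g u < c k ∧
      (∀ s : ℝ, 0 < s → s < u →
        Nf u ≤ (C * Real.exp (C / (u - s)) * g u) ^ (1/2:ℝ) * (Nf s) ^ (1/2:ℝ)) := by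
    intro k
    set P : ℝ → Prop := fun u => ∀ s : ℝ, 0 < s → s < u →
        Nf u ≤ (C * Real.exp (C / (u - s)) * g u) ^ (1/2:ℝ) * (Nf s) ^ (1/2:ℝ) with hP
    set B := Set.Ioc (x (2*k+1)) (x (2*k)) with hB
    set Z := {u : ℝ | ENNReal.ofReal (c k) ≤ ENNReal.ofReal (g u)} ∪ {u : ℝ | ¬ P u} with hZ
    have hPnull : volume.restrict E {u : ℝ | ¬ P u} = 0 := by
      have : ∀ᵐ u ∂(volume.restrict E), P u := hInterp
      exact this
    have hZle : volume.restrict E Z ≤ ENNReal.ofReal (mk k / 2) := by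
      refine le_trans (measure_union_le _ _) ?_
      rw [hPnull, add_zero]
      exact hbad k
    have hBZ : volume.restrict E (B \ Z) ≠ 0 := by
      intro h0
      have h1 : volume.restrict E B ≤ volume.restrict E (B \ Z) + volume.restrict E Z := by
        exact le_trans (measure_mono (Set.subset_diff_union B Z)) (measure_union_le _ _)
      rw [h0, zero_add, hband k] at h1
      have h2 : ENNReal.ofReal (mk k) ≤ ENNReal.ofReal (mk k / 2) := le_trans h1 hZle
      rw [ENNReal.ofReal_le_ofReal_iff (by linarith [hmkpos k])] at h2
      linarith [hmkpos k]
    have h3 : volume ((B \ Z) ∩ E) ≠ 0 := by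
      rwa [← Measure.restrict_apply' hE]
    obtain ⟨u, ⟨huB, huZ⟩, huE⟩ := nonempty_of_measure_ne_zero h3
    simp only [hZ, Set.mem_union, Set.mem_setOf_eq, not_or] at huZ
    obtain ⟨huZ1, huZ2⟩ := huZ
    refine ⟨u, huE, huB, ?_, not_not.1 huZ2⟩
    by_contra hcon
    push_neg at hcon
    exact huZ1 (ENNReal.ofReal_le_ofReal hcon)
  choose t htE htB htg htP using hsel
  -- basic properties of the points t k
  have htmem : ∀ k : ℕ, t k ∈ Set.Ioo 0 T := fun k => hEsub (htE k)
  have htlt : ∀ k : ℕ, t (k+1) < t k := by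
    intro k
    have h1 : t (k+1) ≤ x (2*(k+1)) := (htB (k+1)).2
    have h2 : x (2*(k+1)) < x (2*k+1) := hxlt (2*k+1) (2*(k+1)) (by omega)
    have h3 : x (2*k+1) < t k := (htB k).1
    linarith
  have htgap : ∀ k : ℕ, m/(2*(2*(k:ℝ)+2)*(2*(k:ℝ)+3)) ≤ t k - t (k+1) := by
    intro k
    have h1 : t (k+1) ≤ x (2*(k+1)) := (htB (k+1)).2
    have h3 : x (2*k+1) < t k := (htB k).1
    have h4 : x (2*(k+1)) ≤ x (2*k+1) := (hxlt (2*k+1) (2*(k+1)) (by omega)).le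
    have h5 := hFlip _ _ h4
    rw [hxval, hxval] at h5
    have hval : ((2*(k+1):ℕ):ℝ) = 2*(k:ℝ)+2 := by push_cast; ring
    have hval2 : ((2*k+1:ℕ):ℝ) = 2*(k:ℝ)+1 := by push_cast; ring
    rw [hval, hval2] at h5
    have h6 : (0:ℝ) ≤ (k:ℝ) := Nat.cast_nonneg k
    have h6' : (0:ℝ) < 2*(k:ℝ)+2 := by linarith
    have h6'' : (0:ℝ) < 2*(k:ℝ)+3 := by linarith
    have h8 : m/2 + m/(2*(2*(k:ℝ)+1+1)) - (m/2 + m/(2*(2*(k:ℝ)+2+1)))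
        = m/(2*(2*(k:ℝ)+2)*(2*(k:ℝ)+3)) := by
      field_simp
      ring
    linarith [h5, h8]
  -- positivity along the sequence
  have htpos : ∀ k : ℕ, 0 < t k := fun k => (htmem k).1
  have htIoc : ∀ k : ℕ, t k ∈ Set.Ioc 0 T := fun k => ⟨(htmem k).1, (htmem k).2.le⟩
  have hNtpos : ∀ k : ℕ, 0 < Nf (t k) := fun k => hNpos _ (htIoc k)
  have hgtpos : ∀ k : ℕ, 0 < g (t k) := by
    intro k
    rcases lt_or_ge 0 (g (t k)) with h | h
    · exact h
    have hg0 : g (t k) = 0 := le_antisymm h (hgnn _ (htmem k))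
    have h1 := htP k (t k / 2) (by linarith [htpos k]) (by linarith [htpos k])
    rw [hg0, mul_zero, Real.zero_rpow (by norm_num), zero_mul] at h1
    linarith [hNtpos k]
  -- the logarithmic recurrence
  set L : ℕ → ℝ := fun k => Real.log (Nf (t k)) with hLdef
  set β : ℕ → ℝ := fun k => α * ((k:ℝ)+1)^2 + Real.log I with hβ
  have hrec : ∀ k : ℕ, L k ≤ (1/2)*β k + (1/2)*L (k+1) := by
    intro k
    have hk0 : (0:ℝ) ≤ (k:ℝ) := Nat.cast_nonneg k
    have hgap := htgap k
    have hgappos : 0 < t k - t (k+1) := sub_pos.2 (htlt k)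
    have hA : 0 < C * Real.exp (C / (t k - t (k+1))) * g (t k) := by
      have := hgtpos k; positivity
    have hstep := htP k (t (k+1)) (htpos (k+1)) (htlt k)
    have h2 := Real.log_le_log (hNtpos k) hstep
    rw [Real.log_mul (ne_of_gt (Real.rpow_pos_of_pos hA _))
        (ne_of_gt (Real.rpow_pos_of_pos (hNtpos (k+1)) _)),
      Real.log_rpow hA, Real.log_rpow (hNtpos (k+1))] at h2
    have hlogA : Real.log (C * Real.exp (C / (t k - t (k+1))) * g (t k)) ≤ β k := by
      rw [Real.log_mul (by positivity) (ne_of_gt (hgtpos k)),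
        Real.log_mul (ne_of_gt hC) (Real.exp_ne_zero _), Real.log_exp]
      have h1 : Real.log C ≤ C := le_trans (Real.log_le_sub_one_of_pos hC) (by linarith)
      have hq : (0:ℝ) < 2*(2*(k:ℝ)+2)*(2*(k:ℝ)+3) := by positivity
      have hgap' : m ≤ (t k - t (k+1)) * (2*(2*(k:ℝ)+2)*(2*(k:ℝ)+3)) := by
        rw [div_le_iff₀ hq] at hgap
        exact hgap
      have h2b : C / (t k - t (k+1)) ≤ 18*C/m*((k:ℝ)+1)^2 :=
        arith_gap C m (t k - t (k+1)) (k:ℝ) hC hmpos hgappos hk0 hgap'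
      have h3a : Real.log (g (t k)) ≤ Real.log (c k) := Real.log_le_log (hgtpos k) (htg k).le
      have hmk0 := hmkpos k
      have hpos2 : (0:ℝ) < 2/mk k := div_pos two_pos hmk0
      have hck : c k = (2 / mk k) * I := by
        simp only [hc]
        rw [div_mul_eq_mul_div]
      have h3b : Real.log (c k) = Real.log (2/mk k) + Real.log I := by
        rw [hck, Real.log_mul hpos2.ne' hIpos.ne']
      have h3c : Real.log (2/mk k) ≤ 16/m*((k:ℝ)+1)^2 := by
        have hlog2 := Real.log_le_sub_one_of_pos hpos2
        have heq2 : 2/mk k = (2*(2*(2*(k:ℝ)+1)*(2*(k:ℝ)+2)))/m := by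
          simp only [hmk]
          rw [div_div_eq_mul_div]
        have h4 : (2*(2*(2*(k:ℝ)+1)*(2*(k:ℝ)+2)))/m ≤ 16/m*((k:ℝ)+1)^2 :=
          arith_mk m (k:ℝ) hmpos hk0
        rw [heq2] at hlog2 ⊢
        linarith
      have h3 : Real.log (g (t k)) ≤ 16/m*((k:ℝ)+1)^2 + Real.log I := by
        rw [h3b] at h3a
        linarith
      have hfin := arith_beta C m (k:ℝ) (Real.log C) (C/(t k - t (k+1)))
        (Real.log (g (t k))) (Real.log I) hC hmpos hk0 h1 h2b h3
      simp only [hβ, halpha]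
      exact hfin
    simp only [hLdef]
    linarith only [h2, hlogA]
  -- pass to the limit
  have hs0mem : m/4 ∈ Set.Ioc 0 T := ⟨by linarith, by linarith⟩
  set D : ℝ := |Real.log I| + max 0 (Real.log (Nf (m/4))) with hD
  have hmain : ∀ K : ℕ, L 0 ≤ 6*α + Real.log I + (1/2:ℝ)^K * D := by
    intro K
    have h1 := telescope L β hrec K
    have h2 : ∑ k ∈ Finset.range K, (1/2:ℝ)^(k+1) * β k
        = α * (∑ k ∈ Finset.range K, (1/2:ℝ)^(k+1) * ((k:ℝ)+1)^2)
          + (1 - (1/2:ℝ)^K) * Real.log I := by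
      rw [← geomsum K, Finset.mul_sum, Finset.sum_mul, ← Finset.sum_add_distrib]
      apply Finset.sum_congr rfl
      intro k _
      simp only [hβ]
      ring
    have h3 := sumsq_le K
    have hp : (0:ℝ) ≤ (1/2:ℝ)^K := by positivity
    have hq : (0:ℝ) ≤ ((K:ℝ)^2 + 4*K + 6) * (1/2:ℝ)^K := by positivity
    have h4 : L K ≤ max 0 (Real.log (Nf (m/4))) := by
      have hmt : m/4 ≤ t K := by linarith [hxgt (2*K+1), (htB K).1]
      have h5 : Nf (t K) ≤ Nf (m/4) := hNmono (m/4) hs0mem (t K) (htIoc K) hmt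
      exact le_max_of_le_right (Real.log_le_log (hNtpos K) h5)
    have h6 : α * (∑ k ∈ Finset.range K, (1/2:ℝ)^(k+1) * ((k:ℝ)+1)^2) ≤ α * 6 :=
      mul_le_mul_of_nonneg_left (by linarith) hαpos.le
    rw [h2] at h1
    have h9 : (1/2:ℝ)^K * L K ≤ (1/2:ℝ)^K * max 0 (Real.log (Nf (m/4))) :=
      mul_le_mul_of_nonneg_left h4 hp
    have hfin := arith_main (L 0) (L K)
      (∑ k ∈ Finset.range K, (1/2:ℝ)^(k+1) * ((k:ℝ)+1)^2) ((1/2:ℝ)^K)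
      (Real.log I) α (max 0 (Real.log (Nf (m/4)))) |Real.log I| hp h1 h6 h9
      (neg_le_abs (Real.log I))
    simp only [hD]
    linarith [hfin]
  have htend : Filter.Tendsto (fun K : ℕ => 6*α + Real.log I + (1/2:ℝ)^K * D)
      Filter.atTop (nhds (6*α + Real.log I)) := by
    have h := tendsto_pow_atTop_nhds_zero_of_lt_one (by norm_num : (0:ℝ) ≤ 1/2)
      (by norm_num : (1/2:ℝ) < 1)
    have h2 := (h.mul_const D).const_add (6*α + Real.log I)
    simpa using h2
  have hL0 : L 0 ≤ 6*α + Real.log I := ge_of_tendsto' htend hmain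
  -- conclusion
  have hNT : Nf T ≤ Nf (t 0) := hNmono (t 0) (htIoc 0) T ⟨hT, le_refl T⟩ (htmem 0).2.le
  have hfinal : Nf T ≤ Real.exp (6*α) * I := by
    have he : Nf (t 0) = Real.exp (L 0) := (Real.exp_log (hNtpos 0)).symm
    have h2 : Real.exp (L 0) ≤ Real.exp (6*α + Real.log I) := Real.exp_le_exp.2 hL0
    rw [Real.exp_add, Real.exp_log hIpos] at h2
    rw [he] at hNT
    linarith
  calc ENNReal.ofReal (Nf T) ≤ ENNReal.ofReal (Real.exp (6*α) * I) :=
      ENNReal.ofReal_le_ofReal hfinal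
    _ = ENNReal.ofReal (Real.exp (6*α)) * ENNReal.ofReal I :=
      ENNReal.ofReal_mul (Real.exp_pos _).le
    _ = ENNReal.ofReal (Real.exp (6*α)) * It := by rw [hIt_eq]
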